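/- The exponential generating function identity Σ_{n≥0} L_n^{(α)}(x) t^n/n! = (1+t)^{-(α+1)} e^{x t/(1+t)} holds as an identity of formal power series in t, where L_n^{(α)}(x) = Σ_{k=0}^n (-1)^{n-k} C(n,k) (α+1+k)^{rising (n-k)} x^k. -/

import Mathlib

open Finset PowerSeries

/-- `L_n^{(α)}(x) = Σ_{k=0}^n (-1)^{n-k} C(n,k) (α+1+k)^{rising (n-k)} x^k`. -/
noncomputable def laguerreVal (α x : ℝ) (n : ℕ) : ℝ :=
  ∑ k ∈ Finset.range (n + 1),
    (-1 : ℝ) ^ (n - k) * (n.choose k : ℝ) *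
      (∏ j ∈ Finset.range (n - k), (α + 1 + (k : ℝ) + (j : ℝ))) * x ^ k

/-- The binomial series `(1+t)^c = Σ_n c(c-1)···(c-n+1)/n! · t^n`. -/
noncomputable def binomialSeries' (c : ℝ) : PowerSeries ℝ :=
  PowerSeries.mk fun n => (∏ i ∈ Finset.range n, (c - (i : ℝ))) / (n.factorial : ℝ)

/-- The exponential `exp g = Σ_m g^m/m!` of a formal power series `g`
(with zero constant term); the coefficient of `t^n` only involves `g^m` for `m ≤ n`. -/
noncomputable def expSeries (g : PowerSeries ℝ) : PowerSeries ℝ :=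
  PowerSeries.mk fun n =>
    PowerSeries.coeff n (∑ m ∈ Finset.range (n + 1), ((m.factorial : ℝ)⁻¹) • g ^ m)

lemma descP_prod (r : ℝ) (k : ℕ) :
    (descPochhammer ℤ k).smeval r = ∏ i ∈ Finset.range k, (r - i) := by
  induction k with
  | zero => simp [descPochhammer_zero, Polynomial.smeval_one]
  | succ k ih =>
    rw [descPochhammer_succ_right, Polynomial.smeval_mul, ih, prod_range_succ,
      Polynomial.smeval_sub, Polynomial.smeval_X, Polynomial.smeval_natCast]
    simp

lemma vand (a b : ℝ) (n : ℕ) :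
    (∏ i ∈ Finset.range n, (a + b - i)) =
      ∑ ij ∈ Finset.HasAntidiagonal.antidiagonal n, (n.choose ij.1 : ℝ) *
        ((∏ i ∈ Finset.range ij.1, (a - i)) * (∏ i ∈ Finset.range ij.2, (b - i))) := by
  have := Ring.descPochhammer_smeval_add (r := a) (s := b) n (Commute.all a b)
  simpa [descP_prod] using this

lemma binom_mul (a b : ℝ) :
    binomialSeries' a * binomialSeries' b = binomialSeries' (a + b) := by
  ext n
  rw [PowerSeries.coeff_mul]
  simp only [binomialSeries', coeff_mk]
  rw [vand, sum_div]
  refine Finset.sum_congr rfl fun ij hij => ?_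
  have hsum : ij.1 + ij.2 = n := Finset.HasAntidiagonal.mem_antidiagonal.mp hij
  have h1 : ij.1 ≤ n := by omega
  have hfact : (n.choose ij.1 : ℝ) * ij.1.factorial * ij.2.factorial = n.factorial := by
    have := Nat.choose_mul_factorial_mul_factorial h1
    rw [show n - ij.1 = ij.2 by omega] at this
    exact_mod_cast this
  have hi : (ij.1.factorial : ℝ) ≠ 0 := Nat.cast_ne_zero.mpr ij.1.factorial_ne_zero
  have hj : (ij.2.factorial : ℝ) ≠ 0 := Nat.cast_ne_zero.mpr ij.2.factorial_ne_zero
  have hn : (n.factorial : ℝ) ≠ 0 := Nat.cast_ne_zero.mpr n.factorial_ne_zero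
  field_simp
  linear_combination (-((∏ i ∈ Finset.range ij.1, (a - i)) *
    (∏ i ∈ Finset.range ij.2, (b - i)))) * hfact

lemma binom_zero : binomialSeries' 0 = 1 := by
  ext n
  simp only [binomialSeries', coeff_mk, PowerSeries.coeff_one]
  match n with
  | 0 => norm_num
  | (n+1) =>
    rw [Finset.prod_eq_zero (Finset.mem_range.mpr (show 0 < n + 1 by omega))]
    · norm_num
    · norm_num

lemma binom_one : binomialSeries' 1 = 1 + PowerSeries.X := by
  ext n
  simp only [binomialSeries', coeff_mk, map_add, PowerSeries.coeff_one, PowerSeries.coeff_X]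
  match n with
  | 0 => norm_num
  | 1 => norm_num
  | (n+2) =>
    rw [Finset.prod_eq_zero (Finset.mem_range.mpr (show 1 < n + 2 by omega))]
    · rw [if_neg (by omega), if_neg (by omega)]
      norm_num
    · norm_num

lemma inv_one_add_X : (1 + PowerSeries.X : PowerSeries ℝ)⁻¹ = binomialSeries' (-1) := by
  rw [PowerSeries.inv_eq_iff_mul_eq_one (by simp), ← binom_one, binom_mul]
  norm_num [binom_zero]

lemma binom_pow (m : ℕ) :
    (binomialSeries' (-1) : PowerSeries ℝ) ^ m = binomialSeries' (-(m : ℝ)) := by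
  induction m with
  | zero => simpa using binom_zero.symm
  | succ m ih =>
    rw [pow_succ, ih, binom_mul]
    congr 1
    push_cast
    ring

/-- the exponential generating function identity
`Σ_{n≥0} L_n^{(α)}(x) t^n/n! = (1+t)^{-(α+1)} e^{x t/(1+t)}`
as formal power series in `t`. -/
theorem laguerre_egf (α x : ℝ) :
    (PowerSeries.mk fun n => laguerreVal α x n / (n.factorial : ℝ))
      = binomialSeries' (-(α + 1)) *
        expSeries (x • (PowerSeries.X * (1 + PowerSeries.X : PowerSeries ℝ)⁻¹)) := by
  set g : PowerSeries ℝ := x • (PowerSeries.X * (1 + PowerSeries.X : PowerSeries ℝ)⁻¹) with hgdef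
  have hg : ∀ m : ℕ, g ^ m = (x ^ m) • (PowerSeries.X ^ m * binomialSeries' (-(m : ℝ))) := by
    intro m
    rw [hgdef, smul_pow, mul_pow, inv_one_add_X, binom_pow]
  have hcoeff_g : ∀ q m : ℕ, (PowerSeries.coeff q) (g ^ m) =
      if m ≤ q then x ^ m * ((∏ i ∈ Finset.range (q - m), (-(m : ℝ) - i)) / (q - m).factorial)
      else 0 := by
    intro q m
    rw [hg, map_smul, PowerSeries.coeff_X_pow_mul', smul_eq_mul]
    split_ifs with h
    · simp [binomialSeries']
    · simp
  ext n
  rw [coeff_mk, PowerSeries.coeff_mul]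
  -- rewrite coefficients of expSeries g via a common truncated sum
  have hexp : ∀ q : ℕ, q ≤ n → (PowerSeries.coeff q) (expSeries g) =
      ∑ m ∈ Finset.range (n + 1),
        ((m.factorial : ℝ)⁻¹) * (PowerSeries.coeff q) (g ^ m) := by
    intro q hq
    rw [expSeries, coeff_mk, map_sum]
    simp only [map_smul, smul_eq_mul]
    apply Finset.sum_subset (by
      apply Finset.range_subset_range.mpr; omega)
    intro m hm hmq
    rw [hcoeff_g, if_neg (by simp only [Finset.mem_range] at hm hmq; omega), mul_zero]
  calc laguerreVal α x n / (n.factorial : ℝ)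
      = ∑ ij ∈ Finset.HasAntidiagonal.antidiagonal n, (PowerSeries.coeff ij.1) (binomialSeries' (-(α + 1))) *
          ∑ m ∈ Finset.range (n + 1),
            ((m.factorial : ℝ)⁻¹) * (PowerSeries.coeff ij.2) (g ^ m) := ?_
    _ = ∑ ij ∈ Finset.HasAntidiagonal.antidiagonal n, (PowerSeries.coeff ij.1) (binomialSeries' (-(α + 1))) *
          (PowerSeries.coeff ij.2) (expSeries g) := by
        refine Finset.sum_congr rfl fun ij hij => ?_
        rw [hexp ij.2 (Finset.HasAntidiagonal.antidiagonal.snd_le hij)]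
  -- Now identify the double sum with coefficient of a nicer series
  have key : ∑ ij ∈ Finset.HasAntidiagonal.antidiagonal n, (PowerSeries.coeff ij.1) (binomialSeries' (-(α + 1))) *
        ∑ m ∈ Finset.range (n + 1), ((m.factorial : ℝ)⁻¹) * (PowerSeries.coeff ij.2) (g ^ m)
      = (PowerSeries.coeff n) (binomialSeries' (-(α + 1)) *
          ∑ m ∈ Finset.range (n + 1), ((m.factorial : ℝ)⁻¹) • g ^ m) := by
    rw [PowerSeries.coeff_mul]
    refine Finset.sum_congr rfl fun ij _ => ?_
    rw [map_sum]
    simp only [map_smul, smul_eq_mul]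
  rw [key]
  have expand : binomialSeries' (-(α + 1)) *
        ∑ m ∈ Finset.range (n + 1), ((m.factorial : ℝ)⁻¹) • g ^ m
      = ∑ m ∈ Finset.range (n + 1), (((m.factorial : ℝ)⁻¹) * x ^ m) •
          (PowerSeries.X ^ m * binomialSeries' (-(α + 1) + -(m : ℝ))) := by
    rw [Finset.mul_sum]
    refine Finset.sum_congr rfl fun m _ => ?_
    rw [hg m, ← binom_mul]
    simp only [PowerSeries.smul_eq_C_mul, map_mul]
    ring
  rw [expand, map_sum]
  simp only [map_smul, smul_eq_mul, PowerSeries.coeff_X_pow_mul']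
  rw [laguerreVal, sum_div]
  refine Finset.sum_congr rfl fun k hk => ?_
  have hkn : k ≤ n := by simp only [Finset.mem_range] at hk; omega
  rw [if_pos hkn]
  simp only [binomialSeries', coeff_mk]
  have hprod : ∏ i ∈ Finset.range (n - k), (-(α + 1) + -(k : ℝ) - i)
      = (-1 : ℝ) ^ (n - k) * ∏ j ∈ Finset.range (n - k), (α + 1 + (k : ℝ) + (j : ℝ)) := by
    calc ∏ i ∈ Finset.range (n - k), (-(α + 1) + -(k : ℝ) - i)
        = ∏ i ∈ Finset.range (n - k), (-1) * (α + 1 + (k : ℝ) + (i : ℝ)) :=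
          Finset.prod_congr rfl (fun i _ => by ring)
      _ = (-1 : ℝ) ^ (n - k) * ∏ j ∈ Finset.range (n - k), (α + 1 + (k : ℝ) + (j : ℝ)) := by
          rw [Finset.prod_mul_distrib, Finset.prod_const, Finset.card_range]
  rw [hprod]
  have hfact : (n.choose k : ℝ) * k.factorial * (n - k).factorial = n.factorial := by
    exact_mod_cast Nat.choose_mul_factorial_mul_factorial hkn
  have hk0 : (k.factorial : ℝ) ≠ 0 := Nat.cast_ne_zero.mpr k.factorial_ne_zero
  have hnk0 : ((n - k).factorial : ℝ) ≠ 0 := Nat.cast_ne_zero.mpr (n - k).factorial_ne_zero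
  have hn0 : (n.factorial : ℝ) ≠ 0 := Nat.cast_ne_zero.mpr n.factorial_ne_zero
  field_simp
  linear_combination (
    (∏ j ∈ Finset.range (n - k), (α + 1 + (k : ℝ) + (j : ℝ))) * x ^ k) * hfact
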